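/- If all complex roots of an irreducible GL(ℤ)-polynomial have modulus 1, then they are all roots of unity (Kronecker's theorem for GL(ℤ)-polynomials). -/

import Mathlib

open IntermediateField


/-- A `GL(ℤ)`-polynomial of degree `d`: integer coefficients, leading coefficient
`(-1)^d`, and constant term `1` or `-1`. -/
def IsGLZPoly (P : Polynomial ℤ) (d : ℕ) : Prop :=
  P.natDegree = d ∧ P.leadingCoeff = (-1) ^ d ∧ (P.coeff 0 = 1 ∨ P.coeff 0 = -1)

/-- Kronecker's theorem for `GL(ℤ)`-polynomials: if all complex roots of an irreducible
`GL(ℤ)`-polynomial have modulus `1`, then they are all roots of unity. -/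
theorem kronecker_glzPoly (d : ℕ) (hd : 1 ≤ d)
    (P : Polynomial ℤ) (hP : IsGLZPoly P d) (hirr : Irreducible P)
    (hmod : ∀ z : ℂ, (P.map (Int.castRingHom ℂ)).IsRoot z → ‖z‖ = 1) :
    ∀ z : ℂ, (P.map (Int.castRingHom ℂ)).IsRoot z → ∃ n : ℕ, 0 < n ∧ z ^ n = 1 := by
  intro z hz
  have haeval : Polynomial.aeval z P = 0 := by
    rw [Polynomial.aeval_def, ← Polynomial.eval_map]; exact hz
  -- z is integral over ℤ
  have hzint : IsIntegral ℤ z := by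
    refine ⟨Polynomial.C ((-1) ^ d) * P, ?_, ?_⟩
    · rw [Polynomial.Monic, Polynomial.leadingCoeff_mul, Polynomial.leadingCoeff_C, hP.2.1,
        ← pow_add, ← two_mul, pow_mul]
      norm_num
    · rw [Polynomial.eval₂_mul, Polynomial.eval₂_C]
      rw [Polynomial.aeval_def] at haeval
      rw [haeval, mul_zero]
  have hzintQ : IsIntegral ℚ z := hzint.tower_top
  -- work in the number field ℚ⟮z⟯
  let K : IntermediateField ℚ ℂ := ℚ⟮z⟯
  haveI : FiniteDimensional ℚ K := IntermediateField.adjoin.finiteDimensional hzintQ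
  haveI : NumberField K := ⟨⟩
  set x : K := IntermediateField.AdjoinSimple.gen ℚ z with hx
  have halg : algebraMap K ℂ x = z := IntermediateField.AdjoinSimple.algebraMap_gen ℚ z
  have hxint : IsIntegral ℤ x := by
    rw [← isIntegral_algebraMap_iff (algebraMap K ℂ).injective, halg]
    exact hzint
  have hnorm : ∀ φ : K →+* ℂ, ‖φ x‖ = 1 := by
    intro φ
    have h0 : Polynomial.aeval x P = 0 := by
      have : algebraMap K ℂ (Polynomial.aeval x P) = 0 := by
        rw [← Polynomial.aeval_algebraMap_apply, halg, haeval]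
      exact (map_eq_zero_iff _ (algebraMap K ℂ).injective).mp this
    have hroot : (P.map (Int.castRingHom ℂ)).IsRoot (φ x) := by
      have : Polynomial.aeval (φ x) P = 0 := by
        have := Polynomial.aeval_algHom_apply φ.toIntAlgHom x P
        rw [RingHom.toIntAlgHom_coe] at this
        rw [this, h0, map_zero]
      rwa [Polynomial.aeval_def, ← Polynomial.eval_map] at this
    simpa using hmod (φ x) hroot
  obtain ⟨n, hn, hxn⟩ := NumberField.Embeddings.pow_eq_one_of_norm_eq_one K ℂ hxint hnorm
  refine ⟨n, hn, ?_⟩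
  rw [← halg, ← map_pow, hxn, map_one]
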